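/- Define χ(t,x) = tan(2t)·tanh(x), and let Ω = {(t,x,v) ∈ ℝ³ : cos(2t) ≠ 0, cos v ≠ 0, tan v ≠ χ(t,x)}. Define on Ω: ξ(t,x,v) = −2(1 + χ·tan v)/(tan v − χ) and θ(t,x,v) = −(χ_t + χ_x·ξ)/(1 + χ²), where χ_t = 2·tanh(x)/cos²(2t) and χ_x = tan(2t)/cosh²(x). Then the pair (ξ, θ) satisfies the determining system for reduction operators of the potential fast diffusion equation on Ω. (This verifies Case 4 with χ = tan(2t)tanh(x) of the classification theorem of non-Lie reduction operators.) -/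

import Mathlib

/-- Partial derivative with respect to the first variable `t`. -/
noncomputable def pt3 (f : ℝ × ℝ × ℝ → ℝ) (p : ℝ × ℝ × ℝ) : ℝ :=
  deriv (fun t => f (t, p.2.1, p.2.2)) p.1

/-- Partial derivative with respect to the second variable `x`. -/
noncomputable def px3 (f : ℝ × ℝ × ℝ → ℝ) (p : ℝ × ℝ × ℝ) : ℝ :=
  deriv (fun x => f (p.1, x, p.2.2)) p.2.1

/-- Partial derivative with respect to the third variable `v`. -/
noncomputable def pv3 (f : ℝ × ℝ × ℝ → ℝ) (p : ℝ × ℝ × ℝ) : ℝ :=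
  deriv (fun v => f (p.1, p.2.1, v)) p.2.2

/-- The determining system for reduction operators `Q = ∂_t + ξ∂_x + θ∂_v`
of the potential fast diffusion equation `v_t = v_xx / v_x`:
(i) `ξ_vv = ξ ξ_v`; (ii) `ξ_t = 2ξ_xv − θ_vv − θ_v ξ + θ ξ_v − ξ ξ_x`;
(iii) `θ_xx = θ θ_x`; (iv) `θ_t = 2θ_xv − ξ_xx − ξ_x θ + ξ θ_x − θ θ_v`. -/
def DeterminingSystem (ξ θ : ℝ × ℝ × ℝ → ℝ) (Ω : Set (ℝ × ℝ × ℝ)) : Prop :=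
  ∀ p ∈ Ω,
    pv3 (pv3 ξ) p = ξ p * pv3 ξ p ∧
    pt3 ξ p =
      2 * pv3 (px3 ξ) p - pv3 (pv3 θ) p - pv3 θ p * ξ p + θ p * pv3 ξ p - ξ p * px3 ξ p ∧
    px3 (px3 θ) p = θ p * px3 θ p ∧
    pt3 θ p =
      2 * pv3 (px3 θ) p - px3 (px3 ξ) p - px3 ξ p * θ p + ξ p * px3 θ p - θ p * pv3 θ p


open Real Filter

/-- derivative of tanh -/
lemma hasDerivAt_tanh' (x : ℝ) : HasDerivAt Real.tanh (1 - Real.tanh x ^ 2) x := by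
  have hc : Real.cosh x ≠ 0 := (Real.cosh_pos x).ne'
  have h : HasDerivAt (fun y => Real.sinh y / Real.cosh y)
      ((Real.cosh x * Real.cosh x - Real.sinh x * Real.sinh x) / Real.cosh x ^ 2) x :=
    (Real.hasDerivAt_sinh x).div (Real.hasDerivAt_cosh x) hc
  have heq : (fun y => Real.sinh y / Real.cosh y) = Real.tanh := by
    funext y; rw [Real.tanh_eq_sinh_div_cosh]
  rw [heq] at h
  convert h using 1
  rw [Real.tanh_eq_sinh_div_cosh]
  have h2 := Real.cosh_sq_sub_sinh_sq x
  field_simp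

lemma continuous_tanh' : Continuous Real.tanh := by
  have : Real.tanh = fun y => Real.sinh y / Real.cosh y := by
    funext y; rw [Real.tanh_eq_sinh_div_cosh]
  rw [this]
  exact Real.continuous_sinh.div Real.continuous_cosh fun y => (Real.cosh_pos y).ne'

lemma one_sub_tanh_sq (x : ℝ) : 1 - Real.tanh x ^ 2 = 1 / Real.cosh x ^ 2 := by
  have hc : Real.cosh x ≠ 0 := (Real.cosh_pos x).ne'
  rw [Real.tanh_eq_sinh_div_cosh]
  have h2 := Real.cosh_sq_sub_sinh_sq x
  field_simp
  exact h2

lemma one_sub_tanh_sq_pos (x : ℝ) : 0 < 1 - Real.tanh x ^ 2 := by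
  rw [one_sub_tanh_sq]; positivity

lemma cosh_sq_eq_inv (x : ℝ) : Real.cosh x ^ 2 = (1 - Real.tanh x ^ 2)⁻¹ := by
  rw [one_sub_tanh_sq, one_div, inv_inv]

lemma one_div_cos_sq {x : ℝ} (h : Real.cos x ≠ 0) : 1 / Real.cos x ^ 2 = 1 + Real.tan x ^ 2 := by
  rw [← Real.inv_one_add_tan_sq h, one_div, inv_inv]

lemma cos_sq_eq_inv {x : ℝ} (h : Real.cos x ≠ 0) : Real.cos x ^ 2 = (1 + Real.tan x ^ 2)⁻¹ :=
  (Real.inv_one_add_tan_sq h).symm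

/-- derivative of a Möbius-type expression in f -/
lemma hasDerivAt_mobius {f : ℝ → ℝ} {w f' : ℝ} (hf : HasDerivAt f f' w)
    (p q r s : ℝ) (h : r + s * f w ≠ 0) :
    HasDerivAt (fun z => (p + q * f z) / (r + s * f z))
      ((q * r - p * s) * f' / (r + s * f w) ^ 2) w := by
  have h1 : HasDerivAt (fun z => p + q * f z) (q * f') w := (hf.const_mul q).const_add p
  have h2 : HasDerivAt (fun z => r + s * f z) (s * f') w := (hf.const_mul s).const_add r
  have h3 := h1.div h2 h
  refine h3.congr_deriv ?_
  field_simp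
  ring

/-- derivative of a quadratic-over-square expression in f -/
lemma hasDerivAt_quad {f : ℝ → ℝ} {w f' : ℝ} (hf : HasDerivAt f f' w)
    (p q r s : ℝ) (h : r + s * f w ≠ 0) :
    HasDerivAt (fun z => (p + q * f z ^ 2) / (r + s * f z) ^ 2)
      (2 * (q * r * f w - p * s) * f' / (r + s * f w) ^ 3) w := by
  have h1 : HasDerivAt (fun z => p + q * f z ^ 2) (q * (2 * f w ^ 1 * f')) w :=
    ((hf.pow 2).const_mul q).const_add p
  have h2 : HasDerivAt (fun z => r + s * f z) (s * f') w := (hf.const_mul s).const_add r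
  have h2' : HasDerivAt (fun z => (r + s * f z) ^ 2) (2 * (r + s * f w) ^ 1 * (s * f')) w :=
    h2.pow 2
  have h3 := h1.div h2' (pow_ne_zero 2 h)
  refine h3.congr_deriv ?_
  field_simp
  ring

lemma hasDerivAt_tan2 {t : ℝ} (h : Real.cos (2 * t) ≠ 0) :
    HasDerivAt (fun u => Real.tan (2 * u)) ((1 + Real.tan (2 * t) ^ 2) * 2) t := by
  have h1 : HasDerivAt (fun u : ℝ => 2 * u) 2 t := by
    simpa using (hasDerivAt_id t).const_mul 2
  have h2 := (Real.hasDerivAt_tan h).comp t h1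
  have : (1 + Real.tan (2 * t) ^ 2) * 2 = 1 / Real.cos (2 * t) ^ 2 * 2 := by
    rw [one_div_cos_sq h]
  rw [this]
  exact h2

lemma isOpen_Sv (c : ℝ) : IsOpen {w : ℝ | Real.cos w ≠ 0 ∧ Real.tan w ≠ c} := by
  have h1 : IsOpen {w : ℝ | Real.cos w ≠ 0} :=
    isOpen_compl_singleton.preimage Real.continuous_cos
  have h2 := Real.continuousOn_tan.isOpen_inter_preimage h1 (isOpen_compl_singleton (x := c))
  convert h2 using 1
  rfl

lemma isOpen_St (b T : ℝ) :
    IsOpen {u : ℝ | Real.cos (2 * u) ≠ 0 ∧ T ≠ Real.tan (2 * u) * b} := by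
  have h0 : IsOpen {w : ℝ | Real.cos w ≠ 0} :=
    isOpen_compl_singleton.preimage Real.continuous_cos
  have h1 : IsOpen {u : ℝ | Real.cos (2 * u) ≠ 0} :=
    h0.preimage (continuous_const.mul continuous_id)
  have hg : ContinuousOn (fun u => Real.tan (2 * u)) {u : ℝ | Real.cos (2 * u) ≠ 0} := by
    apply Real.continuousOn_tan.comp ((continuous_const.mul continuous_id).continuousOn)
    intro u hu
    exact hu
  have hO : IsOpen {y : ℝ | T ≠ y * b} := by
    have : IsOpen ((fun y : ℝ => y * b) ⁻¹' {T}ᶜ) :=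
      isOpen_compl_singleton.preimage (continuous_id.mul continuous_const)
    convert this using 1
    ext y
    simp [eq_comm]
  have h2 := hg.isOpen_inter_preimage h1 hO
  convert h2 using 1
  rfl

lemma isOpen_Sx (a T : ℝ) : IsOpen {y : ℝ | T ≠ a * Real.tanh y} := by
  have : IsOpen ((fun y : ℝ => a * Real.tanh y) ⁻¹' {T}ᶜ) :=
    isOpen_compl_singleton.preimage (continuous_const.mul continuous_tanh')
  convert this using 1
  ext y
  simp [eq_comm]

noncomputable def Xi (p : ℝ × ℝ × ℝ) : ℝ :=
  -2 * (1 + Real.tan (2 * p.1) * Real.tanh p.2.1 * Real.tan p.2.2) /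
    (Real.tan p.2.2 - Real.tan (2 * p.1) * Real.tanh p.2.1)

noncomputable def Theta (p : ℝ × ℝ × ℝ) : ℝ :=
  -(2 * Real.tanh p.2.1 / Real.cos (2 * p.1) ^ 2 +
      Real.tan (2 * p.1) / Real.cosh p.2.1 ^ 2 * Xi p) /
    (1 + (Real.tan (2 * p.1) * Real.tanh p.2.1) ^ 2)

section Formulas

variable (t x v : ℝ)

local notation "a" => Real.tan (2 * t)
local notation "b" => Real.tanh x
local notation "T" => Real.tan v
local notation "D" => Real.tan v - Real.tan (2 * t) * Real.tanh x

lemma Xi_apply : Xi (t, x, v) = -2 * (1 + a * b * T) / D := rfl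

lemma Theta_eq (ht : Real.cos (2 * t) ≠ 0) (hD : D ≠ 0) :
    Theta (t, x, v) = 2 * (a - b * T) / D := by
  have hb : (0:ℝ) < 1 - b ^ 2 := one_sub_tanh_sq_pos x
  have hc2 : (0:ℝ) < 1 + (a * b) ^ 2 := by positivity
  have h1 : (0:ℝ) < 1 + a ^ 2 := by positivity
  show -(2 * b / Real.cos (2 * t) ^ 2 + a / Real.cosh x ^ 2 * Xi (t, x, v)) /
      (1 + (a * b) ^ 2) = 2 * (a - b * T) / D
  rw [Xi_apply, cos_sq_eq_inv ht, cosh_sq_eq_inv]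
  have hD' : T - b * a ≠ 0 := by rwa [mul_comm b a]
  field_simp
  ring

lemma pv3_Xi (hv : Real.cos v ≠ 0) (hD : D ≠ 0) :
    pv3 Xi (t, x, v) = 2 * (1 + (a * b) ^ 2) * (1 + T ^ 2) / D ^ 2 := by
  have hden : -(a * b) + 1 * T ≠ 0 := by
    intro h; apply hD; linarith
  have hfun : (fun w => Xi (t, x, w)) =
      fun w => (-2 + -(2 * (a * b)) * Real.tan w) / (-(a * b) + 1 * Real.tan w) := by
    funext w; rw [Xi_apply]; ring
  have h := (hasDerivAt_mobius (Real.hasDerivAt_tan hv) (-2) (-(2 * (a * b))) (-(a * b)) 1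
    hden).deriv
  show deriv (fun w => Xi (t, x, w)) v = _
  rw [hfun, h, one_div_cos_sq hv, show (-(a * b) + 1 * T) = T - a * b by ring]
  congr 1
  ring

lemma px3_Xi (hD : D ≠ 0) :
    px3 Xi (t, x, v) = -2 * a * (1 - b ^ 2) * (1 + T ^ 2) / D ^ 2 := by
  have hden : T + -a * b ≠ 0 := by
    intro h; apply hD; linarith
  have hfun : (fun y => Xi (t, y, v)) =
      fun y => (-2 + -(2 * a * T) * Real.tanh y) / (T + -a * Real.tanh y) := by
    funext y; rw [Xi_apply]; ring
  have h := (hasDerivAt_mobius (hasDerivAt_tanh' x) (-2) (-(2 * a * T)) T (-a) hden).deriv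
  show deriv (fun y => Xi (t, y, v)) x = _
  rw [hfun, h, show (T + -a * b) = T - a * b by ring]
  congr 1
  ring

lemma pt3_Xi (ht : Real.cos (2 * t) ≠ 0) (hD : D ≠ 0) :
    pt3 Xi (t, x, v) = -4 * b * (1 + a ^ 2) * (1 + T ^ 2) / D ^ 2 := by
  have hden : T + -b * a ≠ 0 := by
    intro h; apply hD; linarith
  have hfun : (fun u => Xi (u, x, v)) =
      fun u => (-2 + -(2 * b * T) * Real.tan (2 * u)) / (T + -b * Real.tan (2 * u)) := by
    funext u; rw [Xi_apply]; ring
  have h := (hasDerivAt_mobius (hasDerivAt_tan2 ht) (-2) (-(2 * b * T)) T (-b) hden).deriv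
  show deriv (fun u => Xi (u, x, v)) t = _
  rw [hfun, h, show (T + -b * a) = T - a * b by ring]
  congr 1
  ring

lemma pv3_Theta (ht : Real.cos (2 * t) ≠ 0) (hv : Real.cos v ≠ 0) (hD : D ≠ 0) :
    pv3 Theta (t, x, v) = -2 * a * (1 - b ^ 2) * (1 + T ^ 2) / D ^ 2 := by
  have hmem : v ∈ {w : ℝ | Real.cos w ≠ 0 ∧ Real.tan w ≠ a * b} := ⟨hv, sub_ne_zero.mp hD⟩
  have hev : (fun w => Theta (t, x, w)) =ᶠ[nhds v]
      fun w => (2 * a + -(2 * b) * Real.tan w) / (-(a * b) + 1 * Real.tan w) := by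
    filter_upwards [(isOpen_Sv (a * b)).mem_nhds hmem] with w hw
    rw [Theta_eq t x w ht (sub_ne_zero.mpr hw.2)]
    ring
  have hden : -(a * b) + 1 * T ≠ 0 := by intro h; apply hD; linarith
  have h := (hasDerivAt_mobius (Real.hasDerivAt_tan hv) (2 * a) (-(2 * b)) (-(a * b)) 1
    hden).deriv
  show deriv (fun w => Theta (t, x, w)) v = _
  rw [hev.deriv_eq, h, one_div_cos_sq hv, show (-(a * b) + 1 * T) = T - a * b by ring]
  congr 1
  ring

lemma px3_Theta (ht : Real.cos (2 * t) ≠ 0) (hD : D ≠ 0) :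
    px3 Theta (t, x, v) = 2 * (1 - b ^ 2) * (a ^ 2 - T ^ 2) / D ^ 2 := by
  have hmem : x ∈ {y : ℝ | T ≠ a * Real.tanh y} := fun h => hD (sub_eq_zero.mpr h)
  have hev : (fun y => Theta (t, y, v)) =ᶠ[nhds x]
      fun y => (2 * a + -(2 * T) * Real.tanh y) / (T + -a * Real.tanh y) := by
    filter_upwards [(isOpen_Sx a T).mem_nhds hmem] with y hy
    rw [Theta_eq t y v ht (sub_ne_zero.mpr hy)]
    ring
  have hden : T + -a * b ≠ 0 := by intro h; apply hD; linarith
  have h := (hasDerivAt_mobius (hasDerivAt_tanh' x) (2 * a) (-(2 * T)) T (-a) hden).deriv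
  show deriv (fun y => Theta (t, y, v)) x = _
  rw [hev.deriv_eq, h, show (T + -a * b) = T - a * b by ring]
  congr 1
  ring

lemma pt3_Theta (ht : Real.cos (2 * t) ≠ 0) (hD : D ≠ 0) :
    pt3 Theta (t, x, v) = 4 * (1 + a ^ 2) * (1 - b ^ 2) * T / D ^ 2 := by
  have hmem : t ∈ {u : ℝ | Real.cos (2 * u) ≠ 0 ∧ T ≠ Real.tan (2 * u) * b} :=
    ⟨ht, fun h => hD (sub_eq_zero.mpr h)⟩
  have hev : (fun u => Theta (u, x, v)) =ᶠ[nhds t]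
      fun u => (-(2 * b * T) + 2 * Real.tan (2 * u)) / (T + -b * Real.tan (2 * u)) := by
    filter_upwards [(isOpen_St b T).mem_nhds hmem] with u hu
    rw [Theta_eq u x v hu.1 (sub_ne_zero.mpr hu.2)]
    ring
  have hden : T + -b * a ≠ 0 := by intro h; apply hD; linarith
  have h := (hasDerivAt_mobius (hasDerivAt_tan2 ht) (-(2 * b * T)) 2 T (-b) hden).deriv
  show deriv (fun u => Theta (u, x, v)) t = _
  rw [hev.deriv_eq, h, show (T + -b * a) = T - a * b by ring]
  congr 1
  ring

end Formulas

section Second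

variable (t x v : ℝ)

local notation "a" => Real.tan (2 * t)
local notation "b" => Real.tanh x
local notation "T" => Real.tan v
local notation "D" => Real.tan v - Real.tan (2 * t) * Real.tanh x

lemma pv3pv3_Xi (hv : Real.cos v ≠ 0) (hD : D ≠ 0) :
    pv3 (pv3 Xi) (t, x, v) =
      -4 * (1 + (a * b) ^ 2) * (1 + a * b * T) * (1 + T ^ 2) / D ^ 3 := by
  have hmem : v ∈ {w : ℝ | Real.cos w ≠ 0 ∧ Real.tan w ≠ a * b} := ⟨hv, sub_ne_zero.mp hD⟩
  have hev : (fun w => pv3 Xi (t, x, w)) =ᶠ[nhds v] fun w =>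
      (2 * (1 + (a * b) ^ 2) + 2 * (1 + (a * b) ^ 2) * Real.tan w ^ 2) /
        (-(a * b) + 1 * Real.tan w) ^ 2 := by
    filter_upwards [(isOpen_Sv (a * b)).mem_nhds hmem] with w hw
    rw [pv3_Xi t x w hw.1 (sub_ne_zero.mpr hw.2)]
    ring
  have hden : -(a * b) + 1 * T ≠ 0 := by intro h; apply hD; linarith
  have h := (hasDerivAt_quad (Real.hasDerivAt_tan hv) (2 * (1 + (a * b) ^ 2))
    (2 * (1 + (a * b) ^ 2)) (-(a * b)) 1 hden).deriv
  show deriv (fun w => pv3 Xi (t, x, w)) v = _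
  rw [hev.deriv_eq, h, one_div_cos_sq hv, show (-(a * b) + 1 * T) = T - a * b by ring]
  congr 1
  ring

lemma pv3px3_Xi (hv : Real.cos v ≠ 0) (hD : D ≠ 0) :
    pv3 (px3 Xi) (t, x, v) =
      4 * a * (1 - b ^ 2) * (1 + T ^ 2) * (1 + a * b * T) / D ^ 3 := by
  have hmem : v ∈ {w : ℝ | Real.cos w ≠ 0 ∧ Real.tan w ≠ a * b} := ⟨hv, sub_ne_zero.mp hD⟩
  have hev : (fun w => px3 Xi (t, x, w)) =ᶠ[nhds v] fun w =>
      (-(2 * a * (1 - b ^ 2)) + -(2 * a * (1 - b ^ 2)) * Real.tan w ^ 2) /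
        (-(a * b) + 1 * Real.tan w) ^ 2 := by
    filter_upwards [(isOpen_Sv (a * b)).mem_nhds hmem] with w hw
    rw [px3_Xi t x w (sub_ne_zero.mpr hw.2)]
    ring
  have hden : -(a * b) + 1 * T ≠ 0 := by intro h; apply hD; linarith
  have h := (hasDerivAt_quad (Real.hasDerivAt_tan hv) (-(2 * a * (1 - b ^ 2)))
    (-(2 * a * (1 - b ^ 2))) (-(a * b)) 1 hden).deriv
  show deriv (fun w => px3 Xi (t, x, w)) v = _
  rw [hev.deriv_eq, h, one_div_cos_sq hv, show (-(a * b) + 1 * T) = T - a * b by ring]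
  congr 1
  ring

lemma px3px3_Xi (hD : D ≠ 0) :
    px3 (px3 Xi) (t, x, v) =
      -4 * a * (1 - b ^ 2) * (1 + T ^ 2) * (a - b * T) / D ^ 3 := by
  have hmem : x ∈ {y : ℝ | T ≠ a * Real.tanh y} := fun h => hD (sub_eq_zero.mpr h)
  have hev : (fun y => px3 Xi (t, y, v)) =ᶠ[nhds x] fun y =>
      (-(2 * a * (1 + T ^ 2)) + 2 * a * (1 + T ^ 2) * Real.tanh y ^ 2) /
        (T + -a * Real.tanh y) ^ 2 := by
    filter_upwards [(isOpen_Sx a T).mem_nhds hmem] with y hy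
    rw [px3_Xi t y v (sub_ne_zero.mpr hy)]
    ring
  have hden : T + -a * b ≠ 0 := by intro h; apply hD; linarith
  have h := (hasDerivAt_quad (hasDerivAt_tanh' x) (-(2 * a * (1 + T ^ 2)))
    (2 * a * (1 + T ^ 2)) T (-a) hden).deriv
  show deriv (fun y => px3 Xi (t, y, v)) x = _
  rw [hev.deriv_eq, h, show (T + -a * b) = T - a * b by ring]
  congr 1
  ring

lemma pv3pv3_Theta (ht : Real.cos (2 * t) ≠ 0) (hv : Real.cos v ≠ 0) (hD : D ≠ 0) :
    pv3 (pv3 Theta) (t, x, v) =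
      4 * a * (1 - b ^ 2) * (1 + T ^ 2) * (1 + a * b * T) / D ^ 3 := by
  have hmem : v ∈ {w : ℝ | Real.cos w ≠ 0 ∧ Real.tan w ≠ a * b} := ⟨hv, sub_ne_zero.mp hD⟩
  have hev : (fun w => pv3 Theta (t, x, w)) =ᶠ[nhds v] fun w =>
      (-(2 * a * (1 - b ^ 2)) + -(2 * a * (1 - b ^ 2)) * Real.tan w ^ 2) /
        (-(a * b) + 1 * Real.tan w) ^ 2 := by
    filter_upwards [(isOpen_Sv (a * b)).mem_nhds hmem] with w hw
    rw [pv3_Theta t x w ht hw.1 (sub_ne_zero.mpr hw.2)]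
    ring
  have hden : -(a * b) + 1 * T ≠ 0 := by intro h; apply hD; linarith
  have h := (hasDerivAt_quad (Real.hasDerivAt_tan hv) (-(2 * a * (1 - b ^ 2)))
    (-(2 * a * (1 - b ^ 2))) (-(a * b)) 1 hden).deriv
  show deriv (fun w => pv3 Theta (t, x, w)) v = _
  rw [hev.deriv_eq, h, one_div_cos_sq hv, show (-(a * b) + 1 * T) = T - a * b by ring]
  congr 1
  ring

lemma pv3px3_Theta (ht : Real.cos (2 * t) ≠ 0) (hv : Real.cos v ≠ 0) (hD : D ≠ 0) :
    pv3 (px3 Theta) (t, x, v) =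
      -4 * a * (1 - b ^ 2) * (1 + T ^ 2) * (a - b * T) / D ^ 3 := by
  have hmem : v ∈ {w : ℝ | Real.cos w ≠ 0 ∧ Real.tan w ≠ a * b} := ⟨hv, sub_ne_zero.mp hD⟩
  have hev : (fun w => px3 Theta (t, x, w)) =ᶠ[nhds v] fun w =>
      (2 * (1 - b ^ 2) * a ^ 2 + -(2 * (1 - b ^ 2)) * Real.tan w ^ 2) /
        (-(a * b) + 1 * Real.tan w) ^ 2 := by
    filter_upwards [(isOpen_Sv (a * b)).mem_nhds hmem] with w hw
    rw [px3_Theta t x w ht (sub_ne_zero.mpr hw.2)]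
    ring
  have hden : -(a * b) + 1 * T ≠ 0 := by intro h; apply hD; linarith
  have h := (hasDerivAt_quad (Real.hasDerivAt_tan hv) (2 * (1 - b ^ 2) * a ^ 2)
    (-(2 * (1 - b ^ 2))) (-(a * b)) 1 hden).deriv
  show deriv (fun w => px3 Theta (t, x, w)) v = _
  rw [hev.deriv_eq, h, one_div_cos_sq hv, show (-(a * b) + 1 * T) = T - a * b by ring]
  congr 1
  ring

lemma px3px3_Theta (ht : Real.cos (2 * t) ≠ 0) (hD : D ≠ 0) :
    px3 (px3 Theta) (t, x, v) =
      4 * (1 - b ^ 2) * (a ^ 2 - T ^ 2) * (a - b * T) / D ^ 3 := by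
  have hmem : x ∈ {y : ℝ | T ≠ a * Real.tanh y} := fun h => hD (sub_eq_zero.mpr h)
  have hev : (fun y => px3 Theta (t, y, v)) =ᶠ[nhds x] fun y =>
      (2 * (a ^ 2 - T ^ 2) + -(2 * (a ^ 2 - T ^ 2)) * Real.tanh y ^ 2) /
        (T + -a * Real.tanh y) ^ 2 := by
    filter_upwards [(isOpen_Sx a T).mem_nhds hmem] with y hy
    rw [px3_Theta t y v ht (sub_ne_zero.mpr hy)]
    ring
  have hden : T + -a * b ≠ 0 := by intro h; apply hD; linarith
  have h := (hasDerivAt_quad (hasDerivAt_tanh' x) (2 * (a ^ 2 - T ^ 2))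
    (-(2 * (a ^ 2 - T ^ 2))) T (-a) hden).deriv
  show deriv (fun y => px3 Theta (t, y, v)) x = _
  rw [hev.deriv_eq, h, show (T + -a * b) = T - a * b by ring]
  congr 1
  ring

end Second

theorem determining_Xi_Theta :
    DeterminingSystem Xi Theta
      {p : ℝ × ℝ × ℝ | Real.cos (2 * p.1) ≠ 0 ∧ Real.cos p.2.2 ≠ 0 ∧
        Real.tan p.2.2 ≠ Real.tan (2 * p.1) * Real.tanh p.2.1} := by
  rintro ⟨t, x, v⟩ ⟨ht, hv, hne⟩
  have hD : Real.tan v - Real.tan (2 * t) * Real.tanh x ≠ 0 := sub_ne_zero.mpr hne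
  have hXi := Xi_apply t x v
  have hTh := Theta_eq t x v ht hD
  refine ⟨?_, ?_, ?_, ?_⟩
  · rw [pv3pv3_Xi t x v hv hD, pv3_Xi t x v hv hD, hXi]
    field_simp
    ring
  · rw [pt3_Xi t x v ht hD, pv3px3_Xi t x v hv hD, pv3pv3_Theta t x v ht hv hD,
      pv3_Theta t x v ht hv hD, pv3_Xi t x v hv hD, px3_Xi t x v hD, hXi, hTh]
    have hD' : Real.tan v - Real.tanh x * Real.tan (2 * t) ≠ 0 := by rwa [mul_comm]
    field_simp
    ring
  · rw [px3px3_Theta t x v ht hD, px3_Theta t x v ht hD, hTh]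
    field_simp
    ring
  · rw [pt3_Theta t x v ht hD, pv3px3_Theta t x v ht hv hD, px3px3_Xi t x v hD,
      px3_Xi t x v hD, px3_Theta t x v ht hD, pv3_Theta t x v ht hv hD, hXi, hTh]
    field_simp
    ring


/-- Case 4 with `χ = tan(2t)·tanh(x)` of the classification of non-Lie reduction operators
of the potential fast diffusion equation:
`ξ = −2(1 + χ tan v)/(tan v − χ)`, `θ = −(χ_t + χ_x ξ)/(1 + χ²)`. -/
theorem reduction_operator_case4_tan_tanh
    (χ χt χx : ℝ → ℝ → ℝ)
    (hχ : χ = fun t x => Real.tan (2 * t) * Real.tanh x)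
    (hχt : χt = fun t x => 2 * Real.tanh x / (Real.cos (2 * t)) ^ 2)
    (hχx : χx = fun t x => Real.tan (2 * t) / (Real.cosh x) ^ 2)
    (ξ θ : ℝ × ℝ × ℝ → ℝ)
    (hξ : ξ = fun p =>
      -2 * (1 + χ p.1 p.2.1 * Real.tan p.2.2) / (Real.tan p.2.2 - χ p.1 p.2.1))
    (hθ : θ = fun p =>
      -(χt p.1 p.2.1 + χx p.1 p.2.1 * ξ p) / (1 + (χ p.1 p.2.1) ^ 2)) :
    DeterminingSystem ξ θ
      {p : ℝ × ℝ × ℝ | Real.cos (2 * p.1) ≠ 0 ∧ Real.cos p.2.2 ≠ 0 ∧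
        Real.tan p.2.2 ≠ χ p.1 p.2.1} := by
  have hX : ξ = Xi := by rw [hξ, hχ]; rfl
  have hT : θ = Theta := by rw [hθ, hχt, hχx, hχ, hX]; rfl
  rw [hX, hT, hχ]
  exact determining_Xi_Theta
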